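/- Let φ be an s-model of a finite tree T with maximum degree at most 4, let v be a vertex of T of degree at least 2, and let b_φ(v) denote the maximum of b_φ(Q) over all leaf-to-leaf paths Q of T containing v. If v is balanced in φ, then b_φ(v) = max{b^1 + b^2, b^1 + b^3 + 1}, where b^1 ≥ b^2 ≥ b^3 are the three largest values among b^ℓ_φ(v,u) over the neighbors u of v (with the convention b^i = −1 when v has fewer than i neighbors). -/

import Mathlib

open SimpleGraph

/-- The closed axis-parallel grid segment (bounding box) with corners `p` and `q`.
For axis-aligned `p`, `q` this is exactly the straight segment joining them. -/
def seg (p q : ℤ × ℤ) : Set (ℤ × ℤ) :=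
  {r | r.1 ∈ Set.uIcc p.1 q.1 ∧ r.2 ∈ Set.uIcc p.2 q.2}

/-- A straight model (s-model) of a graph `G`: an injective drawing of the vertices on the
grid `ℤ × ℤ` such that every edge is a horizontal or vertical straight segment, and segments
of distinct edges meet only at the image of a common endpoint. -/
structure SModel {V : Type*} (G : SimpleGraph V) where
  toFun : V → ℤ × ℤ
  inj : Function.Injective toFun
  axisAligned : ∀ ⦃u v : V⦄, G.Adj u v →
    ((toFun u).1 = (toFun v).1 ∧ (toFun u).2 ≠ (toFun v).2) ∨
    ((toFun u).2 = (toFun v).2 ∧ (toFun u).1 ≠ (toFun v).1)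
  noCross : ∀ ⦃u v x y : V⦄, G.Adj u v → G.Adj x y → s(u, v) ≠ s(x, y) →
    ∀ r ∈ seg (toFun u) (toFun v) ∩ seg (toFun x) (toFun y),
      ∃ w : V, (w = u ∨ w = v) ∧ (w = x ∨ w = y) ∧ toFun w = r

/-- The drawing `φ` bends at `b` when passing `a, b, c`: one of the two segments is
vertical and the other horizontal. -/
def bendAt {V : Type*} (φ : V → ℤ × ℤ) (a b c : V) : Prop :=
  ((φ a).1 = (φ b).1 ∧ (φ b).2 = (φ c).2) ∨
  ((φ a).2 = (φ b).2 ∧ (φ b).1 = (φ c).1)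

instance {V : Type*} (φ : V → ℤ × ℤ) (a b c : V) : Decidable (bendAt φ a b c) := by
  unfold bendAt; infer_instance

/-- The list of internal vertices, in order, at which the drawing of the given vertex list
bends. -/
def bendVertices {V : Type*} (φ : V → ℤ × ℤ) : List V → List V
  | a :: b :: c :: rest =>
      (if bendAt φ a b c then [b] else []) ++ bendVertices φ (b :: c :: rest)
  | _ => []

/-- The number of bends of (the drawing of) a vertex list. -/
def bends {V : Type*} (φ : V → ℤ × ℤ) (L : List V) : ℕ :=
  (bendVertices φ L).length

section Defs

variable {V : Type*} [Fintype V]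

/-- `b(φ)`: the maximum number of bends over all leaf-to-leaf paths (0 if there are none). -/
noncomputable def bendNum {G : SimpleGraph V} [DecidableRel G.Adj] (M : SModel G) : ℕ :=
  sSup {n | ∃ (a b : V) (W : G.Walk a b), W.IsPath ∧ G.degree a = 1 ∧ G.degree b = 1 ∧
    bends M.toFun W.support = n}

/-- `b(T)`: the minimum of `b(φ)` over all s-models `φ`. -/
noncomputable def treeBendNum (G : SimpleGraph V) [DecidableRel G.Adj] : ℕ :=
  sInf {n | ∃ M : SModel G, bendNum M = n}

/-- `b^ℓ_φ(p, v)`: the maximum number of bends over all paths from `p` to a leaf that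
contain `v`. -/
noncomputable def leafBend {G : SimpleGraph V} [DecidableRel G.Adj] (M : SModel G)
    (p v : V) : ℕ :=
  sSup {n | ∃ (f : V) (W : G.Walk p f), W.IsPath ∧ G.degree f = 1 ∧ v ∈ W.support ∧
    bends M.toFun W.support = n}

/-- `b^ℓ_T(p, v)`: the minimum of `b^ℓ_φ(p, v)` over all s-models `φ`. -/
noncomputable def leafBendMin (G : SimpleGraph V) [DecidableRel G.Adj] (p v : V) : ℕ :=
  sInf {n | ∃ M : SModel G, leafBend M p v = n}

/-- `b_φ(v)`: the maximum number of bends over all leaf-to-leaf paths containing `v`. -/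
noncomputable def bendNumAt {G : SimpleGraph V} [DecidableRel G.Adj] (M : SModel G)
    (v : V) : ℕ :=
  sSup {n | ∃ (a b : V) (W : G.Walk a b), W.IsPath ∧ G.degree a = 1 ∧ G.degree b = 1 ∧
    v ∈ W.support ∧ bends M.toFun W.support = n}

/-- `p`, `q`, `r` lie on a common horizontal or vertical grid line. -/
def collinearGrid (p q r : ℤ × ℤ) : Prop :=
  (p.1 = q.1 ∧ q.1 = r.1) ∨ (p.2 = q.2 ∧ q.2 = r.2)

/-- `v` is balanced in the s-model `M`: either it has degree at most 1, or two neighbors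
realizing the two largest values of `b^ℓ_M(v, ·)` are drawn collinearly with `v`. -/
def BalancedAt {G : SimpleGraph V} [DecidableRel G.Adj] (M : SModel G) (v : V) : Prop :=
  G.degree v ≤ 1 ∨
  ∃ u1 u2 : V, u1 ≠ u2 ∧ G.Adj v u1 ∧ G.Adj v u2 ∧
    collinearGrid (M.toFun u1) (M.toFun v) (M.toFun u2) ∧
    ∀ w : V, G.Adj v w → w ≠ u1 → w ≠ u2 →
      leafBend M v w ≤ min (leafBend M v u1) (leafBend M v u2)

/-- The value `b^ℓ_M(v, u)` of a real or virtual (`none`) neighbor `u` of `v`; virtual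
neighbors have value `-1`. -/
noncomputable def optVal {G : SimpleGraph V} [DecidableRel G.Adj] (M : SModel G) (v : V) :
    Option V → ℤ
  | none => -1
  | some u => (leafBend M v u : ℤ)

/-- `u1` and `u2` are the first two entries of a nonincreasing (w.r.t. `b^ℓ_M(v, ·)`)
ordering of the real neighbors of `v` other than `p`, padded at the end with virtual
neighbors `none`. -/
def TopTwo {G : SimpleGraph V} [DecidableRel G.Adj] (M : SModel G) (p v : V) :
    Option V → Option V → Prop
  | none, u2 => u2 = none ∧ ∀ w, G.Adj v w → w = p
  | some a, none => G.Adj v a ∧ a ≠ p ∧ ∀ w, G.Adj v w → w ≠ p → w = a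
  | some a, some b => G.Adj v a ∧ a ≠ p ∧ G.Adj v b ∧ b ≠ p ∧ a ≠ b ∧
      leafBend M v b ≤ leafBend M v a ∧
      ∀ w, G.Adj v w → w ≠ p → w ≠ a → w ≠ b → leafBend M v w ≤ leafBend M v b

/-- Criticality of an ordered pair in an s-model `M`: every pair `(p, ∅)` is critical, and an
ordered edge `(p, v)` is critical if, for the first two entries `u1, u2` of some nonincreasing
ordering of the other neighbors of `v`, either `b^ℓ_M(p,v) = b^1` and `(v, u1)` is critical, or
`b^ℓ_M(p,v) = b^2 + 1` and both `(v, u1)` and `(v, u2)` are critical. -/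
inductive Critical {G : SimpleGraph V} [DecidableRel G.Adj] (M : SModel G) :
    V → Option V → Prop
  | base (p : V) : Critical M p none
  | top1 (p v : V) (u1 u2 : Option V) (hadj : G.Adj p v)
      (htop : TopTwo M p v u1 u2)
      (hb : (leafBend M p v : ℤ) = optVal M v u1)
      (hc : Critical M v u1) : Critical M p (some v)
  | top2 (p v : V) (u1 u2 : Option V) (hadj : G.Adj p v)
      (htop : TopTwo M p v u1 u2)
      (hb : (leafBend M p v : ℤ) = optVal M v u2 + 1)
      (hc1 : Critical M v u1) (hc2 : Critical M v u2) : Critical M p (some v)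

end Defs

/-- Membership in the class of trees of the statement: a tree with maximum degree at most 4
having a vertex `r` of degree exactly 2 with distinct neighbors `r1`, `r2`, admitting a
balanced s-model `M` with `b^ℓ_M(r,r1) = b^ℓ_M(r,r2) = k - 1`. -/
def ClassProp (k : ℕ) (V : Type) [Fintype V] (G : SimpleGraph V)
    [DecidableRel G.Adj] : Prop :=
  G.IsTree ∧ (∀ v, G.degree v ≤ 4) ∧
  ∃ (r r1 r2 : V) (M : SModel G),
    G.degree r = 2 ∧ G.Adj r r1 ∧ G.Adj r r2 ∧ r1 ≠ r2 ∧
    (∀ v, BalancedAt M v) ∧ leafBend M r r1 = k - 1 ∧ leafBend M r r2 = k - 1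

/-- The full binary tree of height `k`, with vertex set the lists over `Bool` of length at
most `k`, rooted at the empty list; children of `l` are the lists `c :: l`. -/
def fullBinTree (k : ℕ) : SimpleGraph {l : List Bool // l.length ≤ k} :=
  SimpleGraph.fromRel (fun a b => ∃ c : Bool, (b : List Bool) = c :: (a : List Bool))

/-- A tree with maximum degree at most 4 and minimum bend number `k`. -/
def TreeProp (k : ℕ) (V : Type) [Fintype V] (G : SimpleGraph V)
    [DecidableRel G.Adj] : Prop :=
  G.IsTree ∧ (∀ v, G.degree v ≤ 4) ∧ treeBendNum G = k

/-- The grid graph on `ℤ × ℤ`: two grid points are adjacent iff their distance is 1. -/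
def gridGraph : SimpleGraph (ℤ × ℤ) :=
  SimpleGraph.fromRel (fun p q =>
    (p.1 = q.1 ∧ (p.2 - q.2).natAbs = 1) ∨ (p.2 = q.2 ∧ (p.1 - q.1).natAbs = 1))

/-- `G` is a `B_k`-EPG graph: it has an EPG model by grid paths each with at most `k` bends;
distinct vertices are adjacent iff the corresponding grid paths share a grid edge. -/
def IsBkEPG {X : Type*} (G : SimpleGraph X) (k : ℕ) : Prop :=
  ∃ (s t : X → ℤ × ℤ) (P : ∀ x : X, gridGraph.Walk (s x) (t x)),
    (∀ x, (P x).IsPath) ∧ (∀ x, bends (id : ℤ × ℤ → ℤ × ℤ) (P x).support ≤ k) ∧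
    ∀ x y : X, x ≠ y → (G.Adj x y ↔ ∃ e, e ∈ (P x).edges ∧ e ∈ (P y).edges)

/-- `⟨T, (Q x)_{x}⟩` is a VPT model of `G`: the `Q x` are pairwise distinct paths of the host
tree `T`, and distinct vertices of `G` are adjacent iff their paths share a vertex of `T`. -/
def IsVPTModel {X W : Type*} (G : SimpleGraph X) (T : SimpleGraph W)
    (s t : X → W) (Q : ∀ x : X, T.Walk (s x) (t x)) : Prop :=
  (∀ x, (Q x).IsPath) ∧
  (∀ x y : X, x ≠ y → {w : W | w ∈ (Q x).support} ≠ {w : W | w ∈ (Q y).support}) ∧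
  (∀ x y : X, x ≠ y → (G.Adj x y ↔ ∃ w : W, w ∈ (Q x).support ∧ w ∈ (Q y).support))

/-- A host tree with maximum degree at most 3 and minimum bend number `k`. -/
def HostProp (k : ℕ) (W : Type) [Fintype W] (T : SimpleGraph W)
    [DecidableRel T.Adj] : Prop :=
  T.IsTree ∧ (∀ v, T.degree v ≤ 3) ∧ treeBendNum T = k

section ListLemmas

variable {V : Type*} (φ : V → ℤ × ℤ)

lemma bendAt_symm {a b c : V} (h : bendAt φ a b c) : bendAt φ c b a := by
  unfold bendAt at *; tauto

lemma bends_nil : bends φ [] = 0 := rfl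
lemma bends_one (a : V) : bends φ [a] = 0 := rfl
lemma bends_two (a b : V) : bends φ [a, b] = 0 := rfl

lemma bends_cons₃ (a b c : V) (L : List V) :
    bends φ (a :: b :: c :: L) = (if bendAt φ a b c then 1 else 0) + bends φ (b :: c :: L) := by
  unfold bends
  rw [show bendVertices φ (a :: b :: c :: L)
      = (if bendAt φ a b c then [b] else []) ++ bendVertices φ (b :: c :: L) from rfl]
  by_cases h : bendAt φ a b c <;> simp [h] <;> omega

lemma bends_le (L : List V) : bends φ L ≤ L.length := by
  match L with
  | [] => simp [bends_nil]
  | [a] => simp [bends_one]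
  | [a, b] => simp [bends_two]
  | a :: b :: c :: L =>
    rw [bends_cons₃]
    have := bends_le (b :: c :: L)
    split <;> simp_all <;> omega

lemma bends_append₂ (L1 : List V) (a b : V) (L2 : List V) :
    bends φ (L1 ++ a :: b :: L2) = bends φ (L1 ++ [a, b]) + bends φ (a :: b :: L2) := by
  induction L1 with
  | nil => simp [bends_two]
  | cons c L1 ih =>
    match L1 with
    | [] =>
      simp only [List.cons_append, List.nil_append, bends_cons₃, bends_two]
      omega
    | d :: L1' =>
      have hih := ih
      simp only [List.cons_append] at *
      have hhead : (L1' ++ a :: b :: L2).head? = (L1' ++ [a, b]).head? := by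
        cases L1' <;> simp
      match L1' with
      | [] =>
        simp only [List.nil_append, bends_cons₃] at *
        omega
      | e :: L1'' =>
        simp only [List.cons_append, bends_cons₃] at *
        omega

lemma bends_reverse (L : List V) : bends φ L.reverse = bends φ L := by
  match L with
  | [] => rfl
  | [a] => rfl
  | [a, b] => rfl
  | a :: b :: c :: R =>
    have ih := bends_reverse (b :: c :: R)
    have h1 : (a :: b :: c :: R).reverse = (b :: c :: R).reverse ++ [a] := by simp
    have h2 : (b :: c :: R).reverse = (c :: R).reverse ++ [b] := by simp
    have h3 : (c :: R).reverse = R.reverse ++ [c] := by simp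
    rw [h1, h2, h3]
    have key : bends φ ((R.reverse ++ [c]) ++ [b] ++ [a])
        = bends φ ((R.reverse ++ [c]) ++ [b]) + (if bendAt φ c b a then 1 else 0) := by
      have := bends_append₂ φ R.reverse c b [a]
      simp only [List.append_assoc, List.cons_append, List.nil_append] at this ⊢
      rw [this, bends_cons₃]
      simp [bends_two]
    rw [key, ← h3, ← h2, ih, bends_cons₃]
    have : (if bendAt φ c b a then 1 else 0) = (if bendAt φ a b c then 1 else 0) := by
      by_cases h : bendAt φ a b c
      · simp [h, bendAt_symm φ h]
      · have : ¬ bendAt φ c b a := fun hh => h (bendAt_symm φ hh)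
        simp [h, this]
    omega

lemma bends_glue (x v y : V) (L1 L2 : List V) :
    bends φ ((v :: x :: L1).reverse ++ (y :: L2))
      = bends φ (v :: x :: L1) + bends φ (v :: y :: L2)
        + (if bendAt φ x v y then 1 else 0) := by
  have hrev : (v :: x :: L1).reverse = (L1.reverse ++ [x]) ++ [v] := by simp
  have e1 : (v :: x :: L1).reverse ++ (y :: L2) = (L1.reverse ++ [x]) ++ v :: y :: L2 := by
    simp
  rw [e1, bends_append₂]
  have e2 : (L1.reverse ++ [x]) ++ [v, y] = L1.reverse ++ x :: v :: [y] := by simp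
  rw [e2, bends_append₂]
  have e3 : L1.reverse ++ [x, v] = (v :: x :: L1).reverse := by simp
  rw [e3, bends_reverse]
  have e4 : bends φ [x, v, y] = (if bendAt φ x v y then 1 else 0) := by
    rw [bends_cons₃, bends_two]
    exact Nat.add_zero _
  rw [e4]
  ring


end ListLemmas

section TreeLemmas

variable {V : Type*} {G : SimpleGraph V}

lemma path_unique (hT : G.IsAcyclic) {a b : V} (p q : G.Walk a b)
    (hp : p.IsPath) (hq : q.IsPath) : p = q := by
  have := (isAcyclic_iff_path_unique.mp hT) (⟨p, hp⟩ : G.Path a b) ⟨q, hq⟩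
  exact congrArg Subtype.val this

lemma walk_shape {v a : V} (P : G.Walk v a) (h : v ≠ a) :
    ∃ (x : V) (L : List V), G.Adj v x ∧ P.support = v :: x :: L := by
  cases P with
  | nil => exact absurd rfl h
  | cons hadj q => exact ⟨_, q.support.tail, hadj, by rw [Walk.support_cons]; exact congrArg _ q.support_eq_cons⟩

lemma support_cons_of_adj [DecidableEq V] (hT : G.IsAcyclic) {v f u : V} (P : G.Walk v f)
    (hP : P.IsPath) (ha : G.Adj v u) (hu : u ∈ P.support) :
    ∃ L, P.support = v :: u :: L := by
  have hq : (Walk.cons ha Walk.nil : G.Walk v u).IsPath := by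
    simp [Walk.cons_isPath_iff, ha.ne]
  have ht : (P.takeUntil u hu).IsPath := hP.takeUntil hu
  have heq := path_unique hT _ _ ht hq
  refine ⟨(P.dropUntil u hu).support.tail, ?_⟩
  conv_lhs => rw [← Walk.take_spec P hu]
  rw [Walk.support_append, heq]
  simp

lemma takeUntil_shape [DecidableEq V] {v f x' w : V} {L : List V} (P : G.Walk v f)
    (hs : P.support = v :: x' :: L) (hw' : w ∈ P.support) (hwv : w ≠ v) :
    ∃ M, (P.takeUntil w hw').support = v :: x' :: M := by
  obtain ⟨t, ht⟩ : ∃ t, (P.takeUntil w hw').support ++ t = P.support := by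
    refine ⟨(P.dropUntil w hw').support.tail, ?_⟩
    conv_rhs => rw [← Walk.take_spec P hw']
    rw [Walk.support_append]
  have hcons := (P.takeUntil w hw').support_eq_cons
  rcases htl : (P.takeUntil w hw').support.tail with _ | ⟨z, M⟩
  · exfalso
    have hone : (P.takeUntil w hw').support = [v] := by rw [hcons, htl]
    have h1 : (P.takeUntil w hw').support.getLast? = some w := by
      rw [List.getLast?_eq_getLast (by simp : (P.takeUntil w hw').support ≠ [])]
      exact congrArg _ (Walk.getLast_support _)
    rw [hone] at h1
    simp at h1
    exact hwv h1.symm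
  · rw [hcons, htl, hs] at ht
    simp only [List.cons_append, List.cons.injEq] at ht
    exact ⟨M, by rw [hcons, htl, ht.2.1]⟩

lemma meet_eq_start [DecidableEq V] (hT : G.IsAcyclic) {v f1 f2 x y : V} {L1 L2 : List V}
    (P1 : G.Walk v f1) (P2 : G.Walk v f2) (h1 : P1.IsPath) (h2 : P2.IsPath)
    (hs1 : P1.support = v :: x :: L1) (hs2 : P2.support = v :: y :: L2)
    (hxy : x ≠ y) {w : V} (hw1 : w ∈ P1.support) (hw2 : w ∈ P2.support) : w = v := by
  by_contra hw
  obtain ⟨M1, e1⟩ := takeUntil_shape P1 hs1 hw1 hw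
  obtain ⟨M2, e2⟩ := takeUntil_shape P2 hs2 hw2 hw
  have heq := path_unique hT (P1.takeUntil w hw1) (P2.takeUntil w hw2)
    (h1.takeUntil _) (h2.takeUntil _)
  rw [heq, e2] at e1
  simp at e1
  exact hxy e1.1.symm

end TreeLemmas

section TreeLemmas2

variable {V : Type*} {G : SimpleGraph V}

lemma exists_leaf_path [Fintype V] [DecidableEq V] [DecidableRel G.Adj]
    (hT : G.IsAcyclic) {v u : V} (hadj : G.Adj v u) :
    ∃ (f : V) (P : G.Walk v f), P.IsPath ∧ G.degree f = 1 ∧ u ∈ P.support := by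
  set S : Set ℕ := {n | ∃ (f : V) (P : G.Walk v f), P.IsPath ∧ u ∈ P.support ∧ P.length = n}
    with hS
  have hne : S.Nonempty := ⟨1, u, Walk.cons hadj Walk.nil,
    by simp [Walk.cons_isPath_iff, hadj.ne], by simp, rfl⟩
  have hbdd : BddAbove S := by
    refine ⟨Fintype.card V, fun n hn => ?_⟩
    obtain ⟨f, P, hP, _, hlen⟩ := hn
    have h1 := hP.support_nodup.length_le_card
    rw [Walk.length_support] at h1
    omega
  obtain ⟨f, P, hP, huP, hlen⟩ := Nat.sSup_mem hne hbdd
  refine ⟨f, P, hP, ?_, huP⟩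
  have hfv : f ≠ v := by
    rintro rfl
    have : P = Walk.nil := (Walk.isPath_iff_eq_nil).mp hP
    rw [this] at huP
    simp at huP
    exact hadj.ne' huP
  -- every neighbor of f lies on P
  have hnbr : ∀ y, G.Adj f y → y ∈ P.support := by
    intro y hy
    by_contra hyP
    have hP' : (P.concat hy).IsPath := by
      rw [Walk.isPath_def, Walk.support_concat]
      simp only [List.concat_eq_append, List.nodup_append]
      exact ⟨hP.support_nodup, List.nodup_singleton _, by rintro a ha b hb rfl; rw [List.mem_singleton] at hb; exact hyP (hb ▸ ha)⟩
    have hmem : P.length + 1 ∈ S := ⟨y, P.concat hy, hP',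
      by rw [Walk.support_concat]; simp [huP], by rw [Walk.length_concat]⟩
    have := le_csSup hbdd hmem
    omega
  -- degree at least 1
  obtain ⟨x0, L0, hx0, -⟩ := walk_shape P.reverse hfv
  have hdpos : 0 < G.degree f := G.degree_pos_iff_exists_adj f |>.mpr ⟨x0, hx0⟩
  -- suppose degree ≥ 2
  by_contra hdeg
  have h2 : 1 < G.degree f := by omega
  rw [SimpleGraph.degree, Finset.one_lt_card] at h2
  obtain ⟨y1, hy1, y2, hy2, hyy⟩ := h2
  rw [SimpleGraph.mem_neighborFinset] at hy1 hy2
  have hpen : ∀ y, G.Adj f y → P.support.dropLast.getLast? = some y := by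
    intro y hy
    have hyP := hnbr y hy
    have hyf : y ≠ f := hy.ne'
    set q := P.takeUntil y hyP with hq
    have hqP : q.IsPath := hP.takeUntil hyP
    have hfq : f ∉ q.support := by
      intro hf
      have hft : f ∈ (P.dropUntil y hyP).support.tail := by
        have hfe : f ∈ (P.dropUntil y hyP).support := Walk.end_mem_support _
        rw [(P.dropUntil y hyP).support_eq_cons, List.mem_cons] at hfe
        rcases hfe with h | h
        · exact absurd h hyf.symm
        · exact h
      have hnod := hP.support_nodup
      conv at hnod => rw [← Walk.take_spec P hyP]
      rw [Walk.support_append, List.nodup_append] at hnod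
      exact hnod.2.2 f hf f hft rfl
    have hP'' : (q.concat hy.symm).IsPath := by
      rw [Walk.isPath_def, Walk.support_concat]
      simp only [List.concat_eq_append, List.nodup_append]
      exact ⟨hqP.support_nodup, List.nodup_singleton _, by rintro a ha b hb rfl; rw [List.mem_singleton] at hb; exact hfq (hb ▸ ha)⟩
    have heq : q.concat hy.symm = P := path_unique hT _ _ hP'' hP
    have hsup : q.support ++ [f] = P.support := by
      rw [← heq, Walk.support_concat]
    have hdl : q.support = P.support.dropLast := by
      rw [← hsup]
      simp
    have : q.support.getLast? = some y := by
      rw [List.getLast?_eq_getLast (by simp : q.support ≠ [])]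
      exact congrArg _ (Walk.getLast_support _)
    rw [hdl] at this
    exact this
  have := (hpen y1 hy1).symm.trans (hpen y2 hy2)
  simp at this
  exact hyy this

end TreeLemmas2

section TreeLemmas3

variable {V : Type*} {G : SimpleGraph V}

lemma combine_paths [DecidableEq V] (hT : G.IsAcyclic) {v f1 f2 x y : V} {L1 L2 : List V}
    (P1 : G.Walk v f1) (P2 : G.Walk v f2) (h1 : P1.IsPath) (h2 : P2.IsPath)
    (hs1 : P1.support = v :: x :: L1) (hs2 : P2.support = v :: y :: L2) (hxy : x ≠ y)
    (φ : V → ℤ × ℤ) :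
    (P1.reverse.append P2).IsPath ∧ v ∈ (P1.reverse.append P2).support ∧
      bends φ (P1.reverse.append P2).support
        = bends φ P1.support + bends φ P2.support + (if bendAt φ x v y then 1 else 0) := by
  have hsupp : (P1.reverse.append P2).support = P1.support.reverse ++ P2.support.tail := by
    rw [Walk.support_append, Walk.support_reverse]
  refine ⟨?_, ?_, ?_⟩
  · rw [Walk.isPath_def, hsupp, List.nodup_append]
    refine ⟨by simpa using h1.support_nodup, ?_, ?_⟩
    · have h2n := h2.support_nodup
      rw [P2.support_eq_cons] at h2n
      exact h2n.of_cons
    · intro w hw1 w' hw2 hww; subst hww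
      have hw1' : w ∈ P1.support := by simpa using hw1
      have hw2' : w ∈ P2.support := by
        rw [P2.support_eq_cons]; exact List.mem_cons_of_mem _ hw2
      have hwv := meet_eq_start hT P1 P2 h1 h2 hs1 hs2 hxy hw1' hw2'
      subst hwv
      have h2n := h2.support_nodup
      rw [P2.support_eq_cons, List.nodup_cons] at h2n
      exact h2n.1 hw2
  · rw [hsupp]
    exact List.mem_append_left _ (by simp)
  · have htl : P2.support.tail = y :: L2 := by rw [hs2]; rfl
    rw [hsupp, hs1, htl, bends_glue, ← hs1, ← htl, ← P2.support_eq_cons]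

lemma decompose_path [DecidableEq V] {a b v : V} (W : G.Walk a b) (hW : W.IsPath)
    (hv : v ∈ W.support) (hva : v ≠ a) (hvb : v ≠ b) (φ : V → ℤ × ℤ) :
    ∃ (x y : V) (L1 L2 : List V) (P1 : G.Walk v a) (P2 : G.Walk v b),
      P1.IsPath ∧ P2.IsPath ∧ P1.support = v :: x :: L1 ∧ P2.support = v :: y :: L2 ∧
      G.Adj v x ∧ G.Adj v y ∧ x ≠ y ∧
      bends φ W.support = bends φ P1.support + bends φ P2.support
        + (if bendAt φ x v y then 1 else 0) := by
  set t := W.takeUntil v hv with hts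
  set d := W.dropUntil v hv with hds
  have htP : t.IsPath := hW.takeUntil hv
  have hdP : d.IsPath := hW.dropUntil hv
  obtain ⟨x, L1, hax, hs1⟩ := walk_shape t.reverse hva
  obtain ⟨y, L2, hay, hs2⟩ := walk_shape d hvb
  have htsup : t.support = (v :: x :: L1).reverse := by
    rw [← hs1, Walk.support_reverse, List.reverse_reverse]
  have hWsup : W.support = t.support ++ d.support.tail := by
    conv_lhs => rw [← Walk.take_spec W hv]
    rw [Walk.support_append]
  have htl : d.support.tail = y :: L2 := by rw [hs2]; rfl
  have hxy : x ≠ y := by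
    intro h
    have hnod := hW.support_nodup
    rw [hWsup, List.nodup_append] at hnod
    subst h
    have hx1 : x ∈ t.support := by rw [htsup]; simp
    have hx2 : x ∈ d.support.tail := by rw [htl]; simp
    exact hnod.2.2 x hx1 x hx2 rfl
  refine ⟨x, y, L1, L2, t.reverse, d, htP.reverse, hdP, hs1, hs2, hax, hay, hxy, ?_⟩
  rw [hWsup, htsup, htl, bends_glue, ← hs1, ← htl, ← d.support_eq_cons]

end TreeLemmas3

section Geom

variable {V : Type*} {G : SimpleGraph V}

lemma seg_mem_contra (M : SModel G) {v a b : V} (ha : G.Adj v a) (hb : G.Adj v b)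
    (hab : a ≠ b) (hmem : M.toFun a ∈ seg (M.toFun v) (M.toFun b)) : False := by
  have hsym : s(v, a) ≠ s(v, b) := by
    intro h
    rw [Sym2.eq_iff] at h
    rcases h with ⟨-, h⟩ | ⟨h1, h2⟩
    · exact hab h
    · exact hab (h2.trans h1)
  have hseg : M.toFun a ∈ seg (M.toFun v) (M.toFun a) :=
    ⟨Set.right_mem_uIcc, Set.right_mem_uIcc⟩
  obtain ⟨w, hw1, hw2, hw3⟩ := M.noCross ha hb hsym (M.toFun a) ⟨hseg, hmem⟩
  have hwa : w = a := M.inj hw3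
  subst hwa
  rcases hw2 with h2 | h2
  · exact ha.ne' h2
  · exact hab h2

lemma same_line_opp_v (M : SModel G) {v a b : V} (ha : G.Adj v a) (hb : G.Adj v b)
    (hab : a ≠ b) (h1 : (M.toFun a).1 = (M.toFun v).1) (h2 : (M.toFun b).1 = (M.toFun v).1) :
    ((M.toFun a).2 - (M.toFun v).2) * ((M.toFun b).2 - (M.toFun v).2) < 0 := by
  have hane : (M.toFun v).2 ≠ (M.toFun a).2 := by
    rcases M.axisAligned ha with ⟨-, h⟩ | ⟨-, h⟩
    · exact h
    · exact absurd h1.symm h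
  have hbne : (M.toFun v).2 ≠ (M.toFun b).2 := by
    rcases M.axisAligned hb with ⟨-, h⟩ | ⟨-, h⟩
    · exact h
    · exact absurd h2.symm h
  by_contra hprod
  push_neg at hprod
  have hsame : ((M.toFun v).2 < (M.toFun a).2 ∧ (M.toFun v).2 < (M.toFun b).2) ∨
      ((M.toFun a).2 < (M.toFun v).2 ∧ (M.toFun b).2 < (M.toFun v).2) := by
    rcases lt_or_gt_of_ne hane with h | h <;> rcases lt_or_gt_of_ne hbne with h' | h'
    · exact Or.inl ⟨h, h'⟩
    · exfalso; nlinarith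
    · exfalso; nlinarith
    · exact Or.inr ⟨h, h'⟩
  rcases hsame with ⟨hA, hB⟩ | ⟨hA, hB⟩ <;>
    rcases le_total ((M.toFun a).2) ((M.toFun b).2) with hle | hle
  · exact seg_mem_contra M ha hb hab
      ⟨by rw [h1]; exact Set.left_mem_uIcc, Set.mem_uIcc.mpr (Or.inl ⟨by omega, by omega⟩)⟩
  · exact seg_mem_contra M hb ha (Ne.symm hab)
      ⟨by rw [h2]; exact Set.left_mem_uIcc, Set.mem_uIcc.mpr (Or.inl ⟨by omega, by omega⟩)⟩
  · exact seg_mem_contra M hb ha (Ne.symm hab)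
      ⟨by rw [h2]; exact Set.left_mem_uIcc, Set.mem_uIcc.mpr (Or.inr ⟨by omega, by omega⟩)⟩
  · exact seg_mem_contra M ha hb hab
      ⟨by rw [h1]; exact Set.left_mem_uIcc, Set.mem_uIcc.mpr (Or.inr ⟨by omega, by omega⟩)⟩

lemma same_line_opp_h (M : SModel G) {v a b : V} (ha : G.Adj v a) (hb : G.Adj v b)
    (hab : a ≠ b) (h1 : (M.toFun a).2 = (M.toFun v).2) (h2 : (M.toFun b).2 = (M.toFun v).2) :
    ((M.toFun a).1 - (M.toFun v).1) * ((M.toFun b).1 - (M.toFun v).1) < 0 := by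
  have hane : (M.toFun v).1 ≠ (M.toFun a).1 := by
    rcases M.axisAligned ha with ⟨-, h⟩ | ⟨-, h⟩
    · exact absurd h1.symm h
    · exact h
  have hbne : (M.toFun v).1 ≠ (M.toFun b).1 := by
    rcases M.axisAligned hb with ⟨-, h⟩ | ⟨-, h⟩
    · exact absurd h2.symm h
    · exact h
  by_contra hprod
  push_neg at hprod
  have hsame : ((M.toFun v).1 < (M.toFun a).1 ∧ (M.toFun v).1 < (M.toFun b).1) ∨
      ((M.toFun a).1 < (M.toFun v).1 ∧ (M.toFun b).1 < (M.toFun v).1) := by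
    rcases lt_or_gt_of_ne hane with h | h <;> rcases lt_or_gt_of_ne hbne with h' | h'
    · exact Or.inl ⟨h, h'⟩
    · exfalso; nlinarith
    · exfalso; nlinarith
    · exact Or.inr ⟨h, h'⟩
  rcases hsame with ⟨hA, hB⟩ | ⟨hA, hB⟩ <;>
    rcases le_total ((M.toFun a).1) ((M.toFun b).1) with hle | hle
  · exact seg_mem_contra M ha hb hab
      ⟨Set.mem_uIcc.mpr (Or.inl ⟨by omega, by omega⟩), by rw [h1]; exact Set.left_mem_uIcc⟩
  · exact seg_mem_contra M hb ha (Ne.symm hab)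
      ⟨Set.mem_uIcc.mpr (Or.inl ⟨by omega, by omega⟩), by rw [h2]; exact Set.left_mem_uIcc⟩
  · exact seg_mem_contra M hb ha (Ne.symm hab)
      ⟨Set.mem_uIcc.mpr (Or.inr ⟨by omega, by omega⟩), by rw [h2]; exact Set.left_mem_uIcc⟩
  · exact seg_mem_contra M ha hb hab
      ⟨Set.mem_uIcc.mpr (Or.inr ⟨by omega, by omega⟩), by rw [h1]; exact Set.left_mem_uIcc⟩

lemma not_bend_of_collinear (M : SModel G) {v u1 u2 : V} (h1 : G.Adj v u1) (h2 : G.Adj v u2)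
    (hcol : collinearGrid (M.toFun u1) (M.toFun v) (M.toFun u2)) :
    ¬ bendAt M.toFun u1 v u2 := by
  intro hb
  rcases hcol with ⟨ha1, ha2⟩ | ⟨ha1, ha2⟩
  · rcases hb with ⟨c1, c2⟩ | ⟨c1, c2⟩
    · rcases M.axisAligned h2 with ⟨-, h⟩ | ⟨-, h⟩
      · exact h c2
      · exact h ha2
    · rcases M.axisAligned h1 with ⟨-, h⟩ | ⟨-, h⟩
      · exact h c1.symm
      · exact h ha1.symm
  · rcases hb with ⟨c1, c2⟩ | ⟨c1, c2⟩
    · rcases M.axisAligned h1 with ⟨-, h⟩ | ⟨-, h⟩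
      · exact h ha1.symm
      · exact h c1.symm
    · rcases M.axisAligned h2 with ⟨-, h⟩ | ⟨-, h⟩
      · exact h ha2
      · exact h c2

lemma third_perp (M : SModel G) {v u1 u2 z : V} (h1 : G.Adj v u1) (h2 : G.Adj v u2)
    (hz : G.Adj v z) (h12 : u1 ≠ u2) (hz1 : z ≠ u1) (hz2 : z ≠ u2)
    (hcol : collinearGrid (M.toFun u1) (M.toFun v) (M.toFun u2)) :
    bendAt M.toFun u1 v z ∧ bendAt M.toFun u2 v z := by
  rcases hcol with ⟨ha1, ha2⟩ | ⟨ha1, ha2⟩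
  · have hzeq : (M.toFun z).2 = (M.toFun v).2 := by
      rcases M.axisAligned hz with ⟨hq, -⟩ | ⟨hq, -⟩
      · exfalso
        have p12 := same_line_opp_v M h1 h2 h12 ha1 ha2.symm
        have p1z := same_line_opp_v M h1 hz (Ne.symm hz1) ha1 hq.symm
        have p2z := same_line_opp_v M h2 hz (Ne.symm hz2) ha2.symm hq.symm
        have q := mul_pos_of_neg_of_neg p12 p1z
        nlinarith [q, p2z, sq_nonneg ((M.toFun u1).2 - (M.toFun v).2)]
      · exact hq.symm
    exact ⟨Or.inl ⟨ha1, hzeq.symm⟩, Or.inl ⟨ha2.symm, hzeq.symm⟩⟩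
  · have hzeq : (M.toFun z).1 = (M.toFun v).1 := by
      rcases M.axisAligned hz with ⟨hq, -⟩ | ⟨hq, -⟩
      · exact hq.symm
      · exfalso
        have p12 := same_line_opp_h M h1 h2 h12 ha1 ha2.symm
        have p1z := same_line_opp_h M h1 hz (Ne.symm hz1) ha1 hq.symm
        have p2z := same_line_opp_h M h2 hz (Ne.symm hz2) ha2.symm hq.symm
        have q := mul_pos_of_neg_of_neg p12 p1z
        nlinarith [q, p2z, sq_nonneg ((M.toFun u1).1 - (M.toFun v).1)]
    exact ⟨Or.inr ⟨ha1, hzeq.symm⟩, Or.inr ⟨ha2.symm, hzeq.symm⟩⟩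

end Geom

section Wrap

variable {V : Type*} [Fintype V] {G : SimpleGraph V} [DecidableRel G.Adj]

lemma leafBend_bdd (M : SModel G) (p v : V) :
    BddAbove {n | ∃ (f : V) (W : G.Walk p f), W.IsPath ∧ G.degree f = 1 ∧ v ∈ W.support ∧
      bends M.toFun W.support = n} := by
  refine ⟨Fintype.card V, fun n hn => ?_⟩
  obtain ⟨f, W, hW, -, -, hb⟩ := hn
  have h1 : bends M.toFun W.support ≤ W.support.length := bends_le _ _
  have h2 := hW.support_nodup.length_le_card
  omega

lemma le_leafBend (M : SModel G) {p v f : V} (W : G.Walk p f) (hW : W.IsPath)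
    (hf : G.degree f = 1) (hv : v ∈ W.support) :
    bends M.toFun W.support ≤ leafBend M p v :=
  le_csSup (leafBend_bdd M p v) ⟨f, W, hW, hf, hv, rfl⟩

lemma leafBend_spec [DecidableEq V] (hT : G.IsAcyclic) (M : SModel G) {v u : V}
    (hadj : G.Adj v u) :
    ∃ (f : V) (W : G.Walk v f), W.IsPath ∧ G.degree f = 1 ∧ u ∈ W.support ∧
      bends M.toFun W.support = leafBend M v u := by
  obtain ⟨f, P, hP, hf, hu⟩ := exists_leaf_path hT hadj
  have hne : {n | ∃ (f : V) (W : G.Walk v f), W.IsPath ∧ G.degree f = 1 ∧ u ∈ W.support ∧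
      bends M.toFun W.support = n}.Nonempty := ⟨_, f, P, hP, hf, hu, rfl⟩
  exact Nat.sSup_mem hne (leafBend_bdd M v u)

lemma bendNumAt_bdd (M : SModel G) (v : V) :
    BddAbove {n | ∃ (a b : V) (W : G.Walk a b), W.IsPath ∧ G.degree a = 1 ∧ G.degree b = 1 ∧
      v ∈ W.support ∧ bends M.toFun W.support = n} := by
  refine ⟨Fintype.card V, fun n hn => ?_⟩
  obtain ⟨a, b, W, hW, -, -, -, hb⟩ := hn
  have h1 : bends M.toFun W.support ≤ W.support.length := bends_le _ _
  have h2 := hW.support_nodup.length_le_card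
  omega

end Wrap

set_option maxHeartbeats 1000000 in
theorem stmt_7 {V : Type*} [Fintype V] (G : SimpleGraph V) [DecidableRel G.Adj]
    (hT : G.IsTree) (hdeg : ∀ v, G.degree v ≤ 4) (M : SModel G)
    (v u1 u2 : V) (b3 : ℤ) (hdeg2 : 2 ≤ G.degree v) (hbal : BalancedAt M v)
    (h1 : G.Adj v u1) (h2 : G.Adj v u2) (h12 : u1 ≠ u2)
    (h21 : leafBend M v u2 ≤ leafBend M v u1)
    (htop : ∀ w, G.Adj v w → w ≠ u1 → w ≠ u2 → leafBend M v w ≤ leafBend M v u2)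
    (hb3 : (∃ u3 : V, G.Adj v u3 ∧ u3 ≠ u1 ∧ u3 ≠ u2 ∧
        leafBend M v u3 ≤ leafBend M v u2 ∧
        (∀ w, G.Adj v w → w ≠ u1 → w ≠ u2 → w ≠ u3 →
          leafBend M v w ≤ leafBend M v u3) ∧
        b3 = (leafBend M v u3 : ℤ)) ∨ (G.degree v = 2 ∧ b3 = -1)) :
    (bendNumAt M v : ℤ) =
      max ((leafBend M v u1 : ℤ) + (leafBend M v u2 : ℤ))
        ((leafBend M v u1 : ℤ) + b3 + 1) := by
  classical
  have hacyc : G.IsAcyclic := hT.2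
  rcases hbal with hd | ⟨u1', u2', hne', ha1', ha2', hcol, hmin⟩
  · omega
  set φ := M.toFun with hφ
  set B : V → ℕ := fun w => leafBend M v w with hB
  have F1 : ∀ w, G.Adj v w → B w ≤ B u1 := by
    intro w hw
    by_cases h1w : w = u1
    · subst h1w; exact le_refl _
    by_cases h2w : w = u2
    · subst h2w; exact h21
    · exact (htop w hw h1w h2w).trans h21
  have H2 : ∀ w, G.Adj v w → w ≠ u1 → B w ≤ B u2 := by
    intro w hw hne
    by_cases h2w : w = u2
    · subst h2w; exact le_refl _
    · exact htop w hw hne h2w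
  have F2 : max (B u1') (B u2') = B u1 := by
    apply le_antisymm
    · exact max_le (F1 _ ha1') (F1 _ ha2')
    · by_cases h : u1 = u1'
      · rw [h]; exact le_max_left _ _
      by_cases h' : u1 = u2'
      · rw [h']; exact le_max_right _ _
      · exact (hmin u1 h1 h h').trans min_le_max
  have hpairB : ∀ z, (z = u1' ∨ z = u2') → B u2 ≤ B z := by
    intro z hz
    by_cases hzu2 : z = u2
    · subst hzu2; exact le_refl _
    by_cases hzu1 : z = u1
    · subst hzu1; exact h21
    by_cases hu2p : u2 = u1' ∨ u2 = u2'
    · by_cases hu1p : u1 = u1' ∨ u1 = u2'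
      · exfalso
        rcases hu1p with e1 | e1 <;> rcases hu2p with e2 | e2
        · exact h12 (e1.trans e2.symm)
        · rcases hz with rfl | rfl
          · exact hzu1 e1.symm
          · exact hzu2 e2.symm
        · rcases hz with rfl | rfl
          · exact hzu2 e2.symm
          · exact hzu1 e1.symm
        · exact h12 (e1.trans e2.symm)
      · push_neg at hu1p
        refine h21.trans ((hmin u1 h1 hu1p.1 hu1p.2).trans ?_)
        rcases hz with rfl | rfl
        exacts [min_le_left _ _, min_le_right _ _]
    · push_neg at hu2p
      refine (hmin u2 h2 hu2p.1 hu2p.2).trans ?_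
      rcases hz with rfl | rfl
      exacts [min_le_left _ _, min_le_right _ _]
  have F3 : min (B u1') (B u2') = B u2 := by
    apply le_antisymm
    · by_cases h : u1' = u1
      · have hne2 : u2' ≠ u1 := fun hh => hne' (h.symm ▸ hh ▸ rfl)
        exact (min_le_right _ _).trans (H2 u2' ha2' hne2)
      · exact (min_le_left _ _).trans (H2 u1' ha1' h)
    · exact le_min (hpairB u1' (Or.inl rfl)) (hpairB u2' (Or.inr rfl))
  -- z in pair avoiding u1 u2, when some w in {u1,u2} avoids the pair
  have hzex : ∀ w, (w = u1 ∨ w = u2) → w ≠ u1' → w ≠ u2' →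
      ∃ z, (z = u1' ∨ z = u2') ∧ z ≠ u1 ∧ z ≠ u2 := by
    intro w hw hw1 hw2
    by_cases hA : u1' ≠ u1 ∧ u1' ≠ u2
    · exact ⟨u1', Or.inl rfl, hA.1, hA.2⟩
    by_cases hBc : u2' ≠ u1 ∧ u2' ≠ u2
    · exact ⟨u2', Or.inr rfl, hBc.1, hBc.2⟩
    · exfalso
      have e1 : u1' = u1 ∨ u1' = u2 := by
        by_cases h : u1' = u1
        · exact Or.inl h
        by_cases h' : u1' = u2
        · exact Or.inr h'
        · exact absurd ⟨h, h'⟩ hA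
      have e2 : u2' = u1 ∨ u2' = u2 := by
        by_cases h : u2' = u1
        · exact Or.inl h
        by_cases h' : u2' = u2
        · exact Or.inr h'
        · exact absurd ⟨h, h'⟩ hBc
      rcases e1 with e1 | e1 <;> rcases e2 with e2 | e2
      · exact hne' (e1.trans e2.symm)
      · rcases hw with rfl | rfl
        · exact hw1 e1.symm
        · exact hw2 e2.symm
      · rcases hw with rfl | rfl
        · exact hw2 e2.symm
        · exact hw1 e1.symm
      · exact hne' (e1.trans e2.symm)
  have F4 : ∀ w, G.Adj v w → w ≠ u1' → w ≠ u2' → (B w : ℤ) ≤ b3 := by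
    intro w hw hw1 hw2
    rcases hb3 with ⟨u3, hadj3, h31, h32, h3le, h3max, hb3e⟩ | ⟨hdegv, hb3e⟩
    · rw [hb3e]
      have : B w ≤ B u3 := by
        by_cases hwu3 : w = u3
        · subst hwu3; exact le_refl _
        by_cases hwu1 : w = u1
        · obtain ⟨z, hzp, hz1, hz2⟩ := hzex w (Or.inl hwu1) hw1 hw2
          subst hwu1
          have hza : G.Adj v z := by rcases hzp with rfl | rfl; exacts [ha1', ha2']
          have hzle : B z ≤ B u3 := by
            by_cases hz3 : z = u3
            · subst hz3; exact le_refl _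
            · exact h3max z hza hz1 hz2 hz3
          refine ((hmin w hw hw1 hw2).trans ?_).trans hzle
          rcases hzp with rfl | rfl
          exacts [min_le_left _ _, min_le_right _ _]
        by_cases hwu2 : w = u2
        · obtain ⟨z, hzp, hz1, hz2⟩ := hzex w (Or.inr hwu2) hw1 hw2
          subst hwu2
          have hza : G.Adj v z := by rcases hzp with rfl | rfl; exacts [ha1', ha2']
          have hzle : B z ≤ B u3 := by
            by_cases hz3 : z = u3
            · subst hz3; exact le_refl _
            · exact h3max z hza hz1 hz2 hz3
          refine ((hmin w hw hw1 hw2).trans ?_).trans hzle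
          rcases hzp with rfl | rfl
          exacts [min_le_left _ _, min_le_right _ _]
        · exact h3max w hw hwu1 hwu2 hwu3
      exact_mod_cast this
    · exfalso
      have hsub : ({u1', u2'} : Finset V) ⊆ G.neighborFinset v := by
        intro t ht
        simp only [Finset.mem_insert, Finset.mem_singleton] at ht
        rcases ht with rfl | rfl <;> rw [SimpleGraph.mem_neighborFinset] <;> assumption
      have hcard : ({u1', u2'} : Finset V).card = 2 := Finset.card_pair hne'
      have heq : ({u1', u2'} : Finset V) = G.neighborFinset v := by
        apply Finset.eq_of_subset_of_card_le hsub
        rw [hcard]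
        exact le_of_eq hdegv
      have hwmem : w ∈ G.neighborFinset v := (SimpleGraph.mem_neighborFinset _ _ _).mpr hw
      rw [← heq] at hwmem
      simp only [Finset.mem_insert, Finset.mem_singleton] at hwmem
      rcases hwmem with rfl | rfl
      · exact hw1 rfl
      · exact hw2 rfl
  have notb12 : ¬ bendAt φ u1' v u2' := not_bend_of_collinear M ha1' ha2' hcol
  have notb21 : ¬ bendAt φ u2' v u1' := fun h => notb12 (bendAt_symm φ h)
  -- realizing max path through the collinear pair
  obtain ⟨f1, W1, hW1, hf1, hu1W, hbW1⟩ := leafBend_spec hacyc M ha1'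
  obtain ⟨f2, W2, hW2, hf2, hu2W, hbW2⟩ := leafBend_spec hacyc M ha2'
  obtain ⟨L1, hs1⟩ := support_cons_of_adj hacyc W1 hW1 ha1' hu1W
  obtain ⟨L2, hs2⟩ := support_cons_of_adj hacyc W2 hW2 ha2' hu2W
  have hcomb := combine_paths hacyc W1 W2 hW1 hW2 hs1 hs2 hne' φ
  have hbsum : bends φ (W1.reverse.append W2).support = B u1' + B u2' := by
    rw [hcomb.2.2, if_neg notb12, hbW1, hbW2]
    simp only [hB]
    omega
  have hmem0 : B u1' + B u2' ∈ {n | ∃ (a b : V) (W : G.Walk a b), W.IsPath ∧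
      G.degree a = 1 ∧ G.degree b = 1 ∧ v ∈ W.support ∧ bends M.toFun W.support = n} :=
    ⟨f1, f2, W1.reverse.append W2, hcomb.1, hf1, hf2, hcomb.2.1, hbsum⟩
  have hne0 : {n | ∃ (a b : V) (W : G.Walk a b), W.IsPath ∧
      G.degree a = 1 ∧ G.degree b = 1 ∧ v ∈ W.support ∧
      bends M.toFun W.support = n}.Nonempty := ⟨_, hmem0⟩
  have hbddN := bendNumAt_bdd M v
  have hNmem : bendNumAt M v ∈ {n | ∃ (a b : V) (W : G.Walk a b), W.IsPath ∧
      G.degree a = 1 ∧ G.degree b = 1 ∧ v ∈ W.support ∧ bends M.toFun W.support = n} :=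
    Nat.sSup_mem hne0 hbddN
  have hlow1 : B u1' + B u2' ≤ bendNumAt M v := le_csSup hbddN hmem0
  have hsum12 : B u1' + B u2' = B u1 + B u2 := by
    have := min_add_max (B u1') (B u2')
    omega
  -- upper bound via decomposition of an optimal path
  obtain ⟨a, b, W, hWp, hda, hdb, hvW, hbW⟩ := hNmem
  have hva : v ≠ a := fun h => by rw [← h] at hda; omega
  have hvb : v ≠ b := fun h => by rw [← h] at hdb; omega
  obtain ⟨x, y, Lx, Ly, P1, P2, hP1, hP2, hps1, hps2, hax, hay, hxy, hbdec⟩ :=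
    decompose_path W hWp hvW hva hvb φ
  have hb1x : bends φ P1.support ≤ B x :=
    le_leafBend M P1 hP1 hda (by rw [hps1]; simp)
  have hb2y : bends φ P2.support ≤ B y :=
    le_leafBend M P2 hP2 hdb (by rw [hps2]; simp)
  have hb3le2 : b3 ≤ (B u2 : ℤ) := by
    rcases hb3 with ⟨u3, -, -, -, h3le, -, hb3e⟩ | ⟨-, hb3e⟩
    · rw [hb3e]; exact_mod_cast h3le
    · rw [hb3e]; omega
  have hupper : (bendNumAt M v : ℤ) ≤
      max ((B u1 : ℤ) + (B u2 : ℤ)) ((B u1 : ℤ) + b3 + 1) := by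
    rw [← hbW, hbdec]

    by_cases hbend : bendAt φ x v y
    · rw [if_pos hbend]
      have hkey : (B x : ℤ) + (B y : ℤ) ≤ (B u1 : ℤ) + b3 := by
        by_cases hx1 : x = u1'
        · have hy1 : y ≠ u1' := fun h => hxy (hx1.trans h.symm)
          have hy2 : y ≠ u2' := fun h => notb12 (by rw [← hx1, ← h]; exact hbend)
          have t1 := F4 y hay hy1 hy2
          have t2 : (B x : ℤ) ≤ (B u1 : ℤ) := by exact_mod_cast F1 x hax
          linarith
        by_cases hx2 : x = u2'
        · have hy2 : y ≠ u2' := fun h => hxy (hx2.trans h.symm)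
          have hy1 : y ≠ u1' := fun h => notb21 (by rw [← hx2, ← h]; exact hbend)
          have t1 := F4 y hay hy1 hy2
          have t2 : (B x : ℤ) ≤ (B u1 : ℤ) := by exact_mod_cast F1 x hax
          linarith
        · have t1 := F4 x hax hx1 hx2
          have t2 : (B y : ℤ) ≤ (B u1 : ℤ) := by exact_mod_cast F1 y hay
          linarith
      have hh1 : (bends φ P1.support : ℤ) ≤ B x := by exact_mod_cast hb1x
      have hh2 : (bends φ P2.support : ℤ) ≤ B y := by exact_mod_cast hb2y
      refine le_trans ?_ (le_max_right _ _)
      push_cast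
      linarith
    · rw [if_neg hbend]
      have hkey : (B x : ℤ) + (B y : ℤ) ≤ (B u1 : ℤ) + (B u2 : ℤ) := by
        by_cases hxu1 : x = u1
        · have t1 : (B y : ℤ) ≤ (B u2 : ℤ) := by
            exact_mod_cast H2 y hay (fun h => hxy (hxu1.trans h.symm))
          have t2 : (B x : ℤ) ≤ (B u1 : ℤ) := by exact_mod_cast F1 x hax
          linarith
        · have t1 : (B x : ℤ) ≤ (B u2 : ℤ) := by exact_mod_cast H2 x hax hxu1
          have t2 : (B y : ℤ) ≤ (B u1 : ℤ) := by exact_mod_cast F1 y hay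
          linarith
      have hh1 : (bends φ P1.support : ℤ) ≤ B x := by exact_mod_cast hb1x
      have hh2 : (bends φ P2.support : ℤ) ≤ B y := by exact_mod_cast hb2y
      refine le_trans ?_ (le_max_left _ _)
      push_cast
      linarith
  have hlower : max ((B u1 : ℤ) + (B u2 : ℤ)) ((B u1 : ℤ) + b3 + 1)
      ≤ (bendNumAt M v : ℤ) := by
    apply max_le
    · have h' : B u1 + B u2 ≤ bendNumAt M v := by rw [← hsum12]; exact hlow1
      exact_mod_cast h'
    · by_cases hcase : (B u1 : ℤ) + b3 + 1 ≤ (B u1 : ℤ) + (B u2 : ℤ)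
      · refine hcase.trans ?_
        have h' : B u1 + B u2 ≤ bendNumAt M v := by rw [← hsum12]; exact hlow1
        exact_mod_cast h'
      · push_neg at hcase
        have hb2lt : (B u2 : ℤ) < b3 + 1 := by linarith
        rcases hb3 with ⟨u3, hadj3, h31, h32, h3le, h3max, hb3e⟩ | ⟨-, hb3e⟩
        · -- pick z among u1 u2 u3 outside the pair
          have hz3ex : ∃ z, G.Adj v z ∧ z ≠ u1' ∧ z ≠ u2' ∧ (B u2 : ℤ) ≤ (B z : ℤ) := by
            by_cases hA : u1 ≠ u1' ∧ u1 ≠ u2'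
            · exact ⟨u1, h1, hA.1, hA.2, by exact_mod_cast h21⟩
            by_cases hBc : u2 ≠ u1' ∧ u2 ≠ u2'
            · exact ⟨u2, h2, hBc.1, hBc.2, le_refl _⟩
            by_cases hC : u3 ≠ u1' ∧ u3 ≠ u2'
            · refine ⟨u3, hadj3, hC.1, hC.2, ?_⟩
              show (leafBend M v u2 : ℤ) ≤ (leafBend M v u3 : ℤ)
              rw [hb3e] at hb2lt
              have hq : (leafBend M v u2 : ℤ) < (leafBend M v u3 : ℤ) + 1 := hb2lt
              omega
            · exfalso
              have e1 : u1 = u1' ∨ u1 = u2' := by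
                by_cases h : u1 = u1'
                · exact Or.inl h
                by_cases h' : u1 = u2'
                · exact Or.inr h'
                · exact absurd ⟨h, h'⟩ hA
              have e2 : u2 = u1' ∨ u2 = u2' := by
                by_cases h : u2 = u1'
                · exact Or.inl h
                by_cases h' : u2 = u2'
                · exact Or.inr h'
                · exact absurd ⟨h, h'⟩ hBc
              have e3 : u3 = u1' ∨ u3 = u2' := by
                by_cases h : u3 = u1'
                · exact Or.inl h
                by_cases h' : u3 = u2'
                · exact Or.inr h'
                · exact absurd ⟨h, h'⟩ hC
              rcases e1 with e1 | e1 <;> rcases e2 with e2 | e2 <;>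
                rcases e3 with e3 | e3 <;>
                first
                  | exact h12 (e1.trans e2.symm)
                  | exact h31 (e3.trans e1.symm)
                  | exact h32 (e3.trans e2.symm)
          obtain ⟨z, hzadj, hzp1, hzp2, hzlb⟩ := hz3ex
          have hw1ex : ∃ w1, (w1 = u1' ∨ w1 = u2') ∧ B w1 = B u1 := by
            rcases le_total (B u2') (B u1') with h | h
            · exact ⟨u1', Or.inl rfl, by rw [← F2, max_eq_left h]⟩
            · exact ⟨u2', Or.inr rfl, by rw [← F2, max_eq_right h]⟩
          obtain ⟨w1, hw1p, hw1val⟩ := hw1ex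
          have hw1adj : G.Adj v w1 := by rcases hw1p with rfl | rfl; exacts [ha1', ha2']
          have hzw1 : w1 ≠ z := by
            rcases hw1p with rfl | rfl
            exacts [fun h => hzp1 h.symm, fun h => hzp2 h.symm]
          have hperp : bendAt φ w1 v z := by
            have := third_perp M ha1' ha2' hzadj hne' hzp1 hzp2 hcol
            rcases hw1p with rfl | rfl
            exacts [this.1, this.2]
          obtain ⟨g1, Q1, hQ1, hg1, hQ1m, hq1⟩ := leafBend_spec hacyc M hw1adj
          obtain ⟨g2, Q2, hQ2, hg2, hQ2m, hq2⟩ := leafBend_spec hacyc M hzadj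
          obtain ⟨K1, hk1⟩ := support_cons_of_adj hacyc Q1 hQ1 hw1adj hQ1m
          obtain ⟨K2, hk2⟩ := support_cons_of_adj hacyc Q2 hQ2 hzadj hQ2m
          have hc2 := combine_paths hacyc Q1 Q2 hQ1 hQ2 hk1 hk2 hzw1 φ
          have hv2 : bends φ (Q1.reverse.append Q2).support = B w1 + B z + 1 := by
            rw [hc2.2.2, if_pos hperp, hq1, hq2]
          have hmem2 : B w1 + B z + 1 ∈ {n | ∃ (a b : V) (W : G.Walk a b), W.IsPath ∧
              G.degree a = 1 ∧ G.degree b = 1 ∧ v ∈ W.support ∧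
              bends M.toFun W.support = n} :=
            ⟨g1, g2, Q1.reverse.append Q2, hc2.1, hg1, hg2, hc2.2.1, hv2⟩
          have hle2 : B w1 + B z + 1 ≤ bendNumAt M v := le_csSup hbddN hmem2
          have hle2' : (B w1 : ℤ) + (B z : ℤ) + 1 ≤ (bendNumAt M v : ℤ) := by
            exact_mod_cast hle2
          have hw1c : (B w1 : ℤ) = (B u1 : ℤ) := by exact_mod_cast hw1val
          have hb3z : b3 ≤ (B z : ℤ) := le_trans hb3le2 hzlb
          linarith
        · exfalso
          rw [hb3e] at hb2lt
          have : (0 : ℤ) ≤ (B u2 : ℤ) := by positivity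
          linarith
  exact le_antisymm hupper hlower
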